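/- arXiv:1605.03569 — 4 statements merged into one kernel-verified Lean document; each statement's English description precedes it below -/
import Mathlib

section
/- There exists a cyber-security model for which no optimal security system exists. Specifically, let T be the rooted tree with root r, vertices u₁,u₂,u₃, edges e₁=(r,u₁), e₂=(r,u₂), e₃=(u₁,u₃), and let C = P = {1,2,3}. Then no security system (T,c,p) for M = (T,C,P) is optimal. -/
open Classical in
/-- `maxp n par c p B`: the maximum total prize of a system attack (a rooted
subtree, encoded as a parent-closed set `A` of non-root vertices of the rooted
tree on `Fin (n+1)` with root `0` and parent function `par`; the edge with head
`v` has cost `c v` and the vertex `v` has prize `p v`) whose total edge-cost is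
at most the budget `B`. -/
noncomputable def maxp (n : ℕ) (par : Fin (n+1) → Fin (n+1))
    (c p : Fin (n+1) → ℚ) (B : ℚ) : ℚ :=
  WithBot.unbotD 0 ((((Finset.univ.filter (fun v : Fin (n+1) => v ≠ 0)).powerset).filter
      (fun A => (∀ v ∈ A, par v = 0 ∨ par v ∈ A) ∧ ∑ v ∈ A, c v ≤ B)).image
    (fun A => ∑ v ∈ A, p v)).max

/-- The multiset of values of `f` over the non-root vertices. -/
def valsNR (n : ℕ) (f : Fin (n+1) → ℚ) : Multiset ℚ :=
  (Finset.univ.filter (fun v : Fin (n+1) => v ≠ 0)).val.map f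

/-- The rooted tree with root `r = 0`, vertices `u₁,u₂,u₃` and edges
`(r,u₁)`, `(r,u₂)`, `(u₁,u₃)`. -/
def par3 : Fin 4 → Fin 4 := ![0, 0, 0, 1]

lemma aux_le {α : Type*} (s : Finset α) (f : α → ℚ) (a : α) (ha : a ∈ s) :
    f a ≤ WithBot.unbotD 0 (s.image f).max := by
  have h := Finset.le_max (Finset.mem_image_of_mem f ha)
  cases hm : (s.image f).max with
  | bot => rw [hm] at h; exact absurd h (by simp)
  | coe m => rw [hm] at h; simpa using h

lemma aux_ub {α : Type*} (s : Finset α) (f : α → ℚ) (q : ℚ) (h0 : 0 ≤ q)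
    (h : ∀ a ∈ s, f a ≤ q) : WithBot.unbotD 0 (s.image f).max ≤ q := by
  cases hm : (s.image f).max with
  | bot => simpa using h0
  | coe m =>
    have hmem : m ∈ s.image f := Finset.mem_of_max hm
    obtain ⟨a, ha, rfl⟩ := Finset.mem_image.mp hmem
    simpa using h a ha

noncomputable def M6 (c1 c2 c3 p1 p2 p3 B : ℚ) : ℚ :=
  max (if c1 ≤ B then p1 else 0)
  (max (if c2 ≤ B then p2 else 0)
  (max (if c1 + c2 ≤ B then p1 + p2 else 0)
  (max (if c1 + c3 ≤ B then p1 + p3 else 0)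
  (max (if c1 + (c2 + c3) ≤ B then p1 + (p2 + p3) else 0) 0))))

open Classical in
lemma le_maxp (c p : Fin 4 → ℚ) (B : ℚ) (A : Finset (Fin 4))
    (hA : A ∈ (Finset.univ.filter (fun v : Fin 4 => v ≠ 0)).powerset)
    (hcl : ∀ v ∈ A, par3 v = 0 ∨ par3 v ∈ A)
    (hc : ∑ v ∈ A, c v ≤ B) :
    ∑ v ∈ A, p v ≤ maxp 3 par3 c p B := by
  exact aux_le _ _ A (Finset.mem_filter.mpr ⟨hA, hcl, hc⟩)

open Classical in
lemma maxp_ub (c p : Fin 4 → ℚ) (B q : ℚ) (h0 : 0 ≤ q)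
    (h : ∀ A ∈ (Finset.univ.filter (fun v : Fin 4 => v ≠ 0)).powerset,
      (∀ v ∈ A, par3 v = 0 ∨ par3 v ∈ A) → (∑ v ∈ A, c v ≤ B) → ∑ v ∈ A, p v ≤ q) :
    maxp 3 par3 c p B ≤ q := by
  refine aux_ub _ _ q h0 ?_
  intro A hA
  have := Finset.mem_filter.mp hA
  exact h A this.1 this.2.1 this.2.2

lemma pow_eq : (Finset.univ.filter (fun v : Fin 4 => v ≠ 0)).powerset =
    ({∅, {1}, {2}, {3}, {1,2}, {1,3}, {2,3}, {1,2,3}} : Finset (Finset (Fin 4))) := by decide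

lemma maxp_eq (c p : Fin 4 → ℚ) (B : ℚ) (hB : 0 ≤ B) :
    maxp 3 par3 c p B = M6 (c 1) (c 2) (c 3) (p 1) (p 2) (p 3) B := by
  have s1 : ∀ f : Fin 4 → ℚ, ∑ v ∈ ({1} : Finset (Fin 4)), f v = f 1 := fun f => Finset.sum_singleton f 1
  have s2 : ∀ f : Fin 4 → ℚ, ∑ v ∈ ({2} : Finset (Fin 4)), f v = f 2 := fun f => Finset.sum_singleton f 2
  have s12 : ∀ f : Fin 4 → ℚ, ∑ v ∈ ({1,2} : Finset (Fin 4)), f v = f 1 + f 2 :=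
    fun f => Finset.sum_pair (by decide)
  have s13 : ∀ f : Fin 4 → ℚ, ∑ v ∈ ({1,3} : Finset (Fin 4)), f v = f 1 + f 3 :=
    fun f => Finset.sum_pair (by decide)
  have s123 : ∀ f : Fin 4 → ℚ, ∑ v ∈ ({1,2,3} : Finset (Fin 4)), f v = f 1 + (f 2 + f 3) := by
    intro f
    rw [show ({1,2,3} : Finset (Fin 4)) = insert 1 {2,3} from rfl,
      Finset.sum_insert (by decide), Finset.sum_pair (by decide)]
  refine le_antisymm ?_ ?_
  · refine maxp_ub c p B _ ?_ ?_
    · unfold M6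
      exact le_max_of_le_right (le_max_of_le_right (le_max_of_le_right
        (le_max_of_le_right (le_max_right _ _))))
    · intro A hA hcl hc
      rw [pow_eq] at hA
      simp only [Finset.mem_insert, Finset.mem_singleton] at hA
      unfold M6
      rcases hA with rfl|rfl|rfl|rfl|rfl|rfl|rfl|rfl
      · simp only [Finset.sum_empty]
        exact le_max_of_le_right (le_max_of_le_right (le_max_of_le_right
          (le_max_of_le_right (le_max_right _ _))))
      · rw [s1] at hc ⊢
        exact le_max_of_le_left (if_pos hc).ge
      · rw [s2] at hc ⊢
        exact le_max_of_le_right (le_max_of_le_left (if_pos hc).ge)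
      · exact absurd (hcl 3 (by decide)) (by decide)
      · rw [s12] at hc ⊢
        exact le_max_of_le_right (le_max_of_le_right (le_max_of_le_left (if_pos hc).ge))
      · rw [s13] at hc ⊢
        exact le_max_of_le_right (le_max_of_le_right (le_max_of_le_right
          (le_max_of_le_left (if_pos hc).ge)))
      · exact absurd (hcl 3 (by decide)) (by decide)
      · rw [s123] at hc ⊢
        exact le_max_of_le_right (le_max_of_le_right (le_max_of_le_right
          (le_max_of_le_right (le_max_of_le_left (if_pos hc).ge))))
  · have h0 : (0:ℚ) ≤ maxp 3 par3 c p B := by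
      have := le_maxp c p B ∅ (by decide) (by decide) (by simpa using hB)
      simpa using this
    unfold M6
    refine max_le ?_ (max_le ?_ (max_le ?_ (max_le ?_ (max_le ?_ h0))))
    · split_ifs with h
      · simpa [s1] using le_maxp c p B {1} (by decide) (by decide) (by rw [s1]; exact h)
      · exact h0
    · split_ifs with h
      · simpa [s2] using le_maxp c p B {2} (by decide) (by decide) (by rw [s2]; exact h)
      · exact h0
    · split_ifs with h
      · simpa [s12] using le_maxp c p B {1,2} (by decide) (by decide) (by rw [s12]; exact h)
      · exact h0
    · split_ifs with h
      · simpa [s13] using le_maxp c p B {1,3} (by decide) (by decide) (by rw [s13]; exact h)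
      · exact h0
    · split_ifs with h
      · simpa [s123] using le_maxp c p B {1,2,3} (by decide) (by decide) (by rw [s123]; exact h)
      · exact h0

lemma perm3 {a b d : ℚ} (h : ({a,b,d} : Multiset ℚ) = {1,2,3}) :
    (a=1∧b=2∧d=3)∨(a=1∧b=3∧d=2)∨(a=2∧b=1∧d=3)∨(a=2∧b=3∧d=1)∨(a=3∧b=1∧d=2)∨(a=3∧b=2∧d=1) := by
  have ha : a ∈ ({1,2,3} : Multiset ℚ) := h ▸ (by simp)
  have hb : b ∈ ({1,2,3} : Multiset ℚ) := h ▸ (by simp)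
  have hd : d ∈ ({1,2,3} : Multiset ℚ) := h ▸ (by simp)
  simp only [Multiset.insert_eq_cons, Multiset.mem_cons, Multiset.mem_singleton] at ha hb hd
  rcases ha with rfl|rfl|rfl <;> rcases hb with rfl|rfl|rfl <;> rcases hd with rfl|rfl|rfl <;>
    first
      | (exact absurd h (by decide))
      | norm_num

lemma vals_eq (f : Fin 4 → ℚ) : valsNR 3 f = {f 1, f 2, f 3} := rfl

lemma beats (c p : Fin 4 → ℚ)
    (hopt : ∀ B : ℚ, 0 ≤ B → ∀ c' p' : Fin 4 → ℚ,
        valsNR 3 c' = ({1,2,3} : Multiset ℚ) →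
        valsNR 3 p' = ({1,2,3} : Multiset ℚ) →
        maxp 3 par3 c p B ≤ maxp 3 par3 c' p' B)
    (B : ℚ) (hB : 0 ≤ B) (c' p' : Fin 4 → ℚ)
    (hc' : valsNR 3 c' = ({1,2,3} : Multiset ℚ))
    (hp' : valsNR 3 p' = ({1,2,3} : Multiset ℚ))
    (h : maxp 3 par3 c' p' B < maxp 3 par3 c p B) : False :=
  absurd (hopt B hB c' p' hc' hp') (not_le.mpr h)

-- test one case: c = (1,2,3), p = (1,2,3): beaten at B=1 by W2
example (c p : Fin 4 → ℚ)
    (hopt : ∀ B : ℚ, 0 ≤ B → ∀ c' p' : Fin 4 → ℚ,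
        valsNR 3 c' = ({1,2,3} : Multiset ℚ) →
        valsNR 3 p' = ({1,2,3} : Multiset ℚ) →
        maxp 3 par3 c p B ≤ maxp 3 par3 c' p' B)
    (h1 : c 1 = 1) (h2 : c 2 = 2) (h3 : c 3 = 3)
    (h4 : p 1 = 1) (h5 : p 2 = 2) (h6 : p 3 = 3) : False := by
  refine beats c p hopt 1 (by norm_num) ![0,2,3,1] ![0,1,3,2] (by decide) (by decide) ?_
  rw [maxp_eq c p 1 (by norm_num), maxp_eq ![0,2,3,1] ![0,1,3,2] 1 (by norm_num),
    h1, h2, h3, h4, h5, h6,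
    show (![0,2,3,1] : Fin 4 → ℚ) 1 = 2 from rfl, show (![0,2,3,1] : Fin 4 → ℚ) 2 = 3 from rfl,
    show (![0,2,3,1] : Fin 4 → ℚ) 3 = 1 from rfl, show (![0,1,3,2] : Fin 4 → ℚ) 1 = 1 from rfl,
    show (![0,1,3,2] : Fin 4 → ℚ) 2 = 3 from rfl, show (![0,1,3,2] : Fin 4 → ℚ) 3 = 2 from rfl]
  norm_num [M6]

lemma maxp_W2 (B : ℚ) (hB : 0 ≤ B) :
    maxp 3 par3 ![0,2,3,1] ![0,1,3,2] B = M6 2 3 1 1 3 2 B := maxp_eq _ _ B hB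

lemma maxp_W1 (B : ℚ) (hB : 0 ≤ B) :
    maxp 3 par3 ![0,3,2,1] ![0,2,1,3] B = M6 3 2 1 2 1 3 B := maxp_eq _ _ B hB

/-- With cost multiset `C = {1,2,3}` and prize multiset `P = {1,2,3}`, no
security system on this tree is optimal. -/
theorem stmt3 :
    ¬ ∃ c p : Fin 4 → ℚ,
      valsNR 3 c = ({1,2,3} : Multiset ℚ) ∧
      valsNR 3 p = ({1,2,3} : Multiset ℚ) ∧
      (∀ B : ℚ, 0 ≤ B → ∀ c' p' : Fin 4 → ℚ,
        valsNR 3 c' = ({1,2,3} : Multiset ℚ) →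
        valsNR 3 p' = ({1,2,3} : Multiset ℚ) →
        maxp 3 par3 c p B ≤ maxp 3 par3 c' p' B) := by
  rintro ⟨c, p, hc, hp, hopt⟩
  rw [vals_eq] at hc hp
  rcases perm3 hc with ⟨h1,h2,h3⟩|⟨h1,h2,h3⟩|⟨h1,h2,h3⟩|⟨h1,h2,h3⟩|⟨h1,h2,h3⟩|⟨h1,h2,h3⟩ <;>
  rcases perm3 hp with ⟨h4,h5,h6⟩|⟨h4,h5,h6⟩|⟨h4,h5,h6⟩|⟨h4,h5,h6⟩|⟨h4,h5,h6⟩|⟨h4,h5,h6⟩ <;>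
  first
    | (refine beats c p hopt 1 (by norm_num) ![0,2,3,1] ![0,1,3,2] (by decide) (by decide) ?_
       rw [maxp_W2 _ (by norm_num), maxp_eq c p _ (by norm_num), h1,h2,h3,h4,h5,h6]
       norm_num [M6]
       done)
    | (refine beats c p hopt 2 (by norm_num) ![0,2,3,1] ![0,1,3,2] (by decide) (by decide) ?_
       rw [maxp_W2 _ (by norm_num), maxp_eq c p _ (by norm_num), h1,h2,h3,h4,h5,h6]
       norm_num [M6]
       done)
    | (refine beats c p hopt 3 (by norm_num) ![0,2,3,1] ![0,1,3,2] (by decide) (by decide) ?_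
       rw [maxp_W2 _ (by norm_num), maxp_eq c p _ (by norm_num), h1,h2,h3,h4,h5,h6]
       norm_num [M6]
       done)
    | (refine beats c p hopt 4 (by norm_num) ![0,2,3,1] ![0,1,3,2] (by decide) (by decide) ?_
       rw [maxp_W2 _ (by norm_num), maxp_eq c p _ (by norm_num), h1,h2,h3,h4,h5,h6]
       norm_num [M6]
       done)
    | (refine beats c p hopt 3 (by norm_num) ![0,3,2,1] ![0,2,1,3] (by decide) (by decide) ?_
       rw [maxp_W1 _ (by norm_num), maxp_eq c p _ (by norm_num), h1,h2,h3,h4,h5,h6]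
       norm_num [M6]
       done)
end

section
/- Let T be a path on vertices u₀ = r, u₁, …, uₙ rooted at the leaf u₀, with edges eᵢ = (u_{i-1},uᵢ). If (T,c,p) is a security system with p(uᵢ) > p(u_{i+1}) and c(e_{i+1}) > 0 for some i, then swapping the prizes of uᵢ and u_{i+1} yields an improved security system: for every budget B the attacker's maximum prize does not increase, and for the budget B' = c(e₁)+⋯+c(eᵢ) it strictly decreases. -/
/-- Parent function of the path `r = u₀, u₁, …, uₙ` rooted at the leaf `u₀`. -/
def pathPar (n : ℕ) : Fin (n+1) → Fin (n+1) :=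
  fun v => ⟨v.val - 1, by have := v.isLt; omega⟩


lemma unbot'_max_le {s : Finset ℚ} {m : ℚ} (hm : 0 ≤ m) (h : ∀ x ∈ s, x ≤ m) :
    WithBot.unbotD 0 s.max ≤ m := by
  rcases Finset.eq_empty_or_nonempty s with rfl | hs
  · simpa using hm
  · obtain ⟨a, ha⟩ := s.max_of_nonempty hs
    rw [ha]
    simpa using h a (Finset.mem_of_max ha)

lemma le_unbot'_max {s : Finset ℚ} {x : ℚ} (hx : x ∈ s) : x ≤ WithBot.unbotD 0 s.max := by
  obtain ⟨a, ha⟩ := s.max_of_nonempty ⟨x, hx⟩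
  have h := Finset.le_max hx
  rw [ha] at h ⊢
  simpa using h

lemma le_maxp_s4 (n : ℕ) (par : Fin (n+1) → Fin (n+1)) (c p : Fin (n+1) → ℚ) (B : ℚ)
    (A : Finset (Fin (n+1)))
    (h1 : ∀ v ∈ A, v ≠ 0) (h2 : ∀ v ∈ A, par v = 0 ∨ par v ∈ A)
    (h3 : ∑ v ∈ A, c v ≤ B) :
    ∑ v ∈ A, p v ≤ maxp n par c p B := by
  apply le_unbot'_max
  apply Finset.mem_image_of_mem
  simp only [Finset.mem_filter, Finset.mem_powerset, Finset.subset_iff,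
    Finset.mem_univ, true_and]
  exact ⟨h1, h2, h3⟩

lemma maxp_le (n : ℕ) (par : Fin (n+1) → Fin (n+1)) (c p : Fin (n+1) → ℚ) (B : ℚ)
    (m : ℚ) (hm : 0 ≤ m)
    (h : ∀ A : Finset (Fin (n+1)), (∀ v ∈ A, v ≠ 0) →
      (∀ v ∈ A, par v = 0 ∨ par v ∈ A) → ∑ v ∈ A, c v ≤ B → ∑ v ∈ A, p v ≤ m) :
    maxp n par c p B ≤ m := by
  apply unbot'_max_le hm
  intro x hx
  simp only [maxp, Finset.mem_image, Finset.mem_filter, Finset.mem_powerset] at hx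
  obtain ⟨A, ⟨hsub, hpc, hcost⟩, rfl⟩ := hx
  exact h A (fun v hv => (Finset.mem_filter.1 (hsub hv)).2) hpc hcost

lemma downclosed (n : ℕ) (A : Finset (Fin (n+1)))
    (hA : ∀ v ∈ A, pathPar n v = 0 ∨ pathPar n v ∈ A) :
    ∀ d (v : Fin (n+1)), v ∈ A → ∀ m (hm : m < n+1), 1 ≤ m → v.val = m + d →
      (⟨m, hm⟩ : Fin (n+1)) ∈ A := by
  intro d
  induction d with
  | zero =>
    intro v hv m hm h1 hval
    have : v = ⟨m, hm⟩ := Fin.ext (by simp only [Fin.val_mk]; omega)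
    rwa [← this]
  | succ d ih =>
    intro v hv m hm h1 hval
    rcases hA v hv with h0 | hmem
    · exfalso
      have h2 : (pathPar n v).val = 0 := by rw [h0]; rfl
      simp only [pathPar] at h2
      omega
    · exact ih (pathPar n v) hmem m hm h1 (by simp only [pathPar]; omega)

/-- On a rooted path, if `p uᵢ > p u_{i+1}` and `c e_{i+1} > 0`, then swapping
the prizes of `uᵢ` and `u_{i+1}` gives an improved security system: the max
prize never increases, and strictly decreases for `B' = c e₁ + ⋯ + c eᵢ`. -/
theorem stmt4 (n : ℕ) (c p : Fin (n+1) → ℚ)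
    (hc : ∀ v, 0 ≤ c v) (hp : ∀ v, 0 ≤ p v)
    (i : ℕ) (hi1 : 1 ≤ i) (hin : i + 1 ≤ n)
    (hpi : p ⟨i+1, by omega⟩ < p ⟨i, by omega⟩)
    (hci : 0 < c ⟨i+1, by omega⟩) :
    (∀ B : ℚ, 0 ≤ B →
      maxp n (pathPar n) c (p ∘ Equiv.swap ⟨i, by omega⟩ ⟨i+1, by omega⟩) B ≤
        maxp n (pathPar n) c p B) ∧
    maxp n (pathPar n) c (p ∘ Equiv.swap ⟨i, by omega⟩ ⟨i+1, by omega⟩)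
        (∑ v ∈ Finset.univ.filter
          (fun v : Fin (n+1) => 1 ≤ v.val ∧ v.val ≤ i), c v) <
      maxp n (pathPar n) c p
        (∑ v ∈ Finset.univ.filter
          (fun v : Fin (n+1) => 1 ≤ v.val ∧ v.val ≤ i), c v) := by
    have hab : (⟨i, by omega⟩ : Fin (n+1)) ≠ ⟨i+1, by omega⟩ := by
      simp [Fin.ext_iff]
    -- membership in prefix sets
    have hmemS : ∀ (k : ℕ) (v : Fin (n+1)),
        v ∈ Finset.univ.filter (fun v : Fin (n+1) => 1 ≤ v.val ∧ v.val ≤ k) ↔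
          1 ≤ v.val ∧ v.val ≤ k := by
      intro k v; simp
    have hSnr : ∀ (k : ℕ) (v : Fin (n+1)),
        v ∈ Finset.univ.filter (fun v : Fin (n+1) => 1 ≤ v.val ∧ v.val ≤ k) → v ≠ 0 := by
      intro k v hv h0
      rw [(hmemS k v)] at hv
      rw [h0] at hv
      simp at hv
    have hSpc : ∀ (k : ℕ) (v : Fin (n+1)),
        v ∈ Finset.univ.filter (fun v : Fin (n+1) => 1 ≤ v.val ∧ v.val ≤ k) →
          pathPar n v = 0 ∨ pathPar n v ∈
            Finset.univ.filter (fun v : Fin (n+1) => 1 ≤ v.val ∧ v.val ≤ k) := by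
      intro k v hv
      rw [hmemS k v] at hv
      by_cases h1 : v.val = 1
      · left; exact Fin.ext (by simp [pathPar]; omega)
      · right; rw [hmemS]; simp only [pathPar]; omega
    -- the general comparison of prize sums over any set
    have hAle : ∀ A : Finset (Fin (n+1)),
        (∀ v ∈ A, pathPar n v = 0 ∨ pathPar n v ∈ A) →
        ∑ v ∈ A, (p ∘ Equiv.swap (⟨i, by omega⟩ : Fin (n+1)) ⟨i+1, by omega⟩) v ≤
          ∑ v ∈ A, p v := by
      intro A hpc
      by_cases hbA : (⟨i+1, by omega⟩ : Fin (n+1)) ∈ A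
      · have haA : (⟨i, by omega⟩ : Fin (n+1)) ∈ A := by
          rcases hpc _ hbA with h0' | h
          · exfalso
            have h2 : (pathPar n (⟨i+1, by omega⟩ : Fin (n+1))).val = 0 := by rw [h0']; rfl
            simp only [pathPar] at h2
            omega
          · have he : pathPar n (⟨i+1, by omega⟩ : Fin (n+1)) = ⟨i, by omega⟩ :=
              Fin.ext (by simp [pathPar])
            rwa [he] at h
        refine le_of_eq (Finset.sum_equiv (Equiv.swap ⟨i, by omega⟩ ⟨i+1, by omega⟩)
          (fun v => ?_) (fun v _ => rfl))
        by_cases hva : v = (⟨i, by omega⟩ : Fin (n+1))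
        · subst hva; simp [Equiv.swap_apply_left, haA, hbA]
        by_cases hvb : v = (⟨i+1, by omega⟩ : Fin (n+1))
        · subst hvb; simp [Equiv.swap_apply_right, haA, hbA]
        · rw [Equiv.swap_apply_of_ne_of_ne hva hvb]
      · by_cases haA : (⟨i, by omega⟩ : Fin (n+1)) ∈ A
        · rw [← Finset.add_sum_erase _ _ haA, ← Finset.add_sum_erase _ p haA]
          have hrest : ∑ v ∈ A.erase ⟨i, by omega⟩,
              (p ∘ Equiv.swap (⟨i, by omega⟩ : Fin (n+1)) ⟨i+1, by omega⟩) v =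
              ∑ v ∈ A.erase ⟨i, by omega⟩, p v := by
            refine Finset.sum_congr rfl (fun v hv => ?_)
            have hva : v ≠ ⟨i, by omega⟩ := (Finset.mem_erase.1 hv).1
            have hvb : v ≠ ⟨i+1, by omega⟩ := fun h => hbA (h ▸ (Finset.mem_erase.1 hv).2)
            simp [Equiv.swap_apply_of_ne_of_ne hva hvb]
          rw [hrest]
          have hswa : (p ∘ Equiv.swap (⟨i, by omega⟩ : Fin (n+1)) ⟨i+1, by omega⟩)
              ⟨i, by omega⟩ = p ⟨i+1, by omega⟩ := by simp
          rw [hswa]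
          exact add_le_add_left (le_of_lt hpi) _
        · refine le_of_eq (Finset.sum_congr rfl (fun v hv => ?_))
          have hva : v ≠ ⟨i, by omega⟩ := fun h => haA (h ▸ hv)
          have hvb : v ≠ ⟨i+1, by omega⟩ := fun h => hbA (h ▸ hv)
          simp [Equiv.swap_apply_of_ne_of_ne hva hvb]
    constructor
    · intro B hB
      have h0 : (0:ℚ) ≤ maxp n (pathPar n) c p B := by
        have h := le_maxp_s4 n (pathPar n) c p B ∅ (by simp) (by simp) (by simpa using hB)
        simpa using h
      apply maxp_le _ _ _ _ _ _ h0
      intro A hnr hpc hcost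
      exact (hAle A hpc).trans (le_maxp_s4 n (pathPar n) c p B A hnr hpc hcost)
    · set Si : Finset (Fin (n+1)) :=
        Finset.univ.filter (fun v : Fin (n+1) => 1 ≤ v.val ∧ v.val ≤ i) with hSi
      set B' : ℚ := ∑ v ∈ Si, c v with hB'
      -- prefix i is admissible for budget B'
      have hPle : ∑ v ∈ Si, p v ≤ maxp n (pathPar n) c p B' :=
        le_maxp_s4 n (pathPar n) c p B' Si (hSnr i) (hSpc i) le_rfl
      -- cost of prefix (i+1)
      have hins : Finset.univ.filter (fun v : Fin (n+1) => 1 ≤ v.val ∧ v.val ≤ i+1) =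
          insert (⟨i+1, by omega⟩ : Fin (n+1)) Si := by
        ext v
        simp only [hSi, Finset.mem_insert, Finset.mem_filter, Finset.mem_univ, true_and,
          Fin.ext_iff, Fin.val_mk]
        omega
      have hbSi : (⟨i+1, by omega⟩ : Fin (n+1)) ∉ Si := by
        rw [hSi, hmemS]; simp only [Fin.val_mk]; omega
      have hcostsucc : ∑ v ∈ Finset.univ.filter
          (fun v : Fin (n+1) => 1 ≤ v.val ∧ v.val ≤ i+1), c v
          = c ⟨i+1, by omega⟩ + B' := by
        rw [hins, Finset.sum_insert hbSi]
      -- the strict inequality between the two prefix-i sums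
      have haSi : (⟨i, by omega⟩ : Fin (n+1)) ∈ Si := by
        rw [hSi, hmemS]; simp only [Fin.val_mk]; omega
      have hkeyeq : ∑ v ∈ Si, (p ∘ Equiv.swap (⟨i, by omega⟩ : Fin (n+1)) ⟨i+1, by omega⟩) v
          < ∑ v ∈ Si, p v := by
        rw [← Finset.add_sum_erase _ _ haSi, ← Finset.add_sum_erase _ p haSi]
        have hrest : ∑ v ∈ Si.erase ⟨i, by omega⟩,
            (p ∘ Equiv.swap (⟨i, by omega⟩ : Fin (n+1)) ⟨i+1, by omega⟩) v =
            ∑ v ∈ Si.erase ⟨i, by omega⟩, p v := by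
          refine Finset.sum_congr rfl (fun v hv => ?_)
          have hva : v ≠ ⟨i, by omega⟩ := (Finset.mem_erase.1 hv).1
          have hvb : v ≠ ⟨i+1, by omega⟩ := fun h => hbSi (h ▸ (Finset.mem_erase.1 hv).2)
          simp [Equiv.swap_apply_of_ne_of_ne hva hvb]
        rw [hrest]
        have hswa : (p ∘ Equiv.swap (⟨i, by omega⟩ : Fin (n+1)) ⟨i+1, by omega⟩)
            ⟨i, by omega⟩ = p ⟨i+1, by omega⟩ := by simp
        rw [hswa]
        exact add_lt_add_left hpi _
      -- upper bound for swapped system at budget B'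
      have hub : maxp n (pathPar n) c
          (p ∘ Equiv.swap (⟨i, by omega⟩ : Fin (n+1)) ⟨i+1, by omega⟩) B' ≤
          ∑ v ∈ Si, (p ∘ Equiv.swap (⟨i, by omega⟩ : Fin (n+1)) ⟨i+1, by omega⟩) v := by
        apply maxp_le
        · exact Finset.sum_nonneg (fun v _ => hp _)
        intro A hnr hpc hcost
        -- b ∉ A
        have hbA : (⟨i+1, by omega⟩ : Fin (n+1)) ∉ A := by
          intro hbA
          have hsub : Finset.univ.filter
              (fun v : Fin (n+1) => 1 ≤ v.val ∧ v.val ≤ i+1) ⊆ A := by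
            intro v hv
            rw [hmemS] at hv
            have hd := downclosed n A hpc (i+1 - v.val) _ hbA v.val v.isLt hv.1 (by simp only [Fin.val_mk]; omega)
            have hveq : (⟨v.val, v.isLt⟩ : Fin (n+1)) = v := Fin.ext rfl
            rwa [hveq] at hd
          have hle : ∑ v ∈ Finset.univ.filter
              (fun v : Fin (n+1) => 1 ≤ v.val ∧ v.val ≤ i+1), c v ≤ ∑ v ∈ A, c v :=
            Finset.sum_le_sum_of_subset_of_nonneg hsub (fun v _ _ => hc v)
          rw [hcostsucc] at hle
          have : c ⟨i+1, by omega⟩ ≤ 0 := by linarith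
          linarith
        have hsubSi : A ⊆ Si := by
          intro v hv
          rw [hSi, hmemS]
          have h1 : 1 ≤ v.val := by
            rcases Nat.eq_zero_or_pos v.val with h0 | h0
            · exact absurd (Fin.ext h0 : v = 0) (hnr v hv)
            · exact h0
          refine ⟨h1, ?_⟩
          by_contra hgt
          push_neg at hgt
          have hd := downclosed n A hpc (v.val - (i+1)) v hv (i+1) (by omega) (by omega)
            (by omega)
          exact hbA hd
        exact Finset.sum_le_sum_of_subset_of_nonneg hsubSi (fun v _ _ => hp _)
      calc maxp n (pathPar n) c
            (p ∘ Equiv.swap (⟨i, by omega⟩ : Fin (n+1)) ⟨i+1, by omega⟩) B'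
          ≤ _ := hub
        _ < ∑ v ∈ Si, p v := hkeyeq
        _ ≤ _ := hPle
end

section
/- Let T be a path on n+1 vertices rooted at a leaf, and let M = (T,C,P) be a cyber-security model. The security system assigning the penetration costs to the edges in decreasing order from the root and the prizes to the vertices in increasing order from the root is optimal: for every budget B it minimizes the attacker's maximum prize over all security systems for M. -/
/-- Any submultiset of a mapped multiset is the image of a submultiset. -/
lemma exists_pre {α β : Type*} [DecidableEq α] [DecidableEq β] (f : α → β) :
    ∀ (S : Multiset β) (s : Multiset α), S ≤ s.map f → ∃ t, t ≤ s ∧ t.map f = S := by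
  intro S
  induction S using Multiset.induction_on with
  | empty => intro s _; exact ⟨0, Multiset.zero_le s, rfl⟩
  | cons a S ih =>
    intro s hS
    have ha : a ∈ s.map f := Multiset.mem_of_le hS (Multiset.mem_cons_self a S)
    obtain ⟨x, hx, rfl⟩ := Multiset.mem_map.1 ha
    have h2 : S ≤ (s.map f).erase (f x) := by
      have h := Multiset.erase_le_erase (f x) hS
      rwa [Multiset.erase_cons_head] at h
    rw [← Multiset.map_erase_of_mem f s hx] at h2
    obtain ⟨t, ht, rfl⟩ := ih (s.erase x) h2
    refine ⟨x ::ₘ t, ?_, by simp⟩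
    calc x ::ₘ t ≤ x ::ₘ s.erase x := Multiset.cons_le_cons x ht
      _ = s := Multiset.cons_erase hx

/-- A parent-closed set of nonzero vertices of the rooted path is
downward closed. -/
lemma dcOfPar {n : ℕ} (A : Finset (Fin (n+1)))
    (hpar : ∀ v ∈ A, pathPar n v = 0 ∨ pathPar n v ∈ A) :
    ∀ v ∈ A, ∀ w : Fin (n+1), w ≠ 0 → w ≤ v → w ∈ A := by
  have main : ∀ d : ℕ, ∀ v ∈ A, ∀ w : Fin (n+1), w ≠ 0 → w ≤ v →
      v.val - w.val = d → w ∈ A := by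
    intro d
    induction d with
    | zero =>
      intro v hv w _ hle hd
      have hle' := Fin.le_def.1 hle
      have : w = v := Fin.ext (by omega)
      exact this ▸ hv
    | succ d ih =>
      intro v hv w hw hle hd
      have hle' := Fin.le_def.1 hle
      have hw1 : w.val ≠ 0 := fun h => hw (Fin.ext h)
      have hv2 : 2 ≤ v.val := by omega
      have hpv : pathPar n v ∈ A := by
        rcases hpar v hv with h | h
        · exfalso
          have : (pathPar n v).val = 0 := by rw [h]; rfl
          simp only [pathPar] at this
          omega
        · exact h
      refine ih (pathPar n v) hpv w hw ?_ ?_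
      · rw [Fin.le_def]; simp only [pathPar]; omega
      · simp only [pathPar]; omega
  intro v hv w hw hle
  exact main (v.val - w.val) v hv w hw hle rfl

/-- Key exchange lemma: for a function decreasing on nonzero vertices, the sum
over any set of nonzero vertices is at most the sum over the downward-closed
set of the same cardinality. -/
lemma keyLem {n : ℕ} (f : Fin (n+1) → ℚ)
    (hdec : ∀ v w : Fin (n+1), v ≠ 0 → v ≤ w → f w ≤ f v)
    (A D : Finset (Fin (n+1)))
    (hA0 : (0 : Fin (n+1)) ∉ A)
    (hDC : ∀ v ∈ A, ∀ w : Fin (n+1), w ≠ 0 → w ≤ v → w ∈ A)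
    (hD0 : (0 : Fin (n+1)) ∉ D)
    (hcard : D.card = A.card) :
    ∑ v ∈ D, f v ≤ ∑ v ∈ A, f v := by
  set k := A.card with hk
  have hksub : A ⊆ Finset.univ.erase 0 := fun v hv =>
    Finset.mem_erase.2 ⟨fun h => hA0 (h ▸ hv), Finset.mem_univ v⟩
  have hkn : k ≤ n := by
    have := Finset.card_le_card hksub
    rwa [Finset.card_erase_of_mem (Finset.mem_univ _), Finset.card_univ,
      Fintype.card_fin, Nat.add_sub_cancel] at this
  -- the order embedding enumerating D
  set eD := D.orderEmbOfFin hcard with heD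
  have hge : ∀ m (hm : m < k), m + 1 ≤ (eD ⟨m, hm⟩).val := by
    intro m
    induction m with
    | zero =>
      intro hm
      have hmem := Finset.orderEmbOfFin_mem D hcard ⟨0, hm⟩
      have : (eD ⟨0, hm⟩).val ≠ 0 := by
        intro h
        exact hD0 (by rwa [show (0 : Fin (n+1)) = eD ⟨0, hm⟩ from (Fin.ext h.symm)])
      omega
    | succ m ih =>
      intro hm
      have h1 := ih (Nat.lt_of_succ_lt hm)
      have h2 : eD ⟨m, Nat.lt_of_succ_lt hm⟩ < eD ⟨m+1, hm⟩ :=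
        (D.orderEmbOfFin hcard).strictMono (by simp [Fin.lt_def])
      have h2' := Fin.lt_def.1 h2
      omega
  -- characterize A as the interval {1, …, k}
  have hAchar : ∀ v : Fin (n+1), v ∈ A ↔ 1 ≤ v.val ∧ v.val ≤ k := by
    intro v
    constructor
    · intro hv
      have hv0 : v.val ≠ 0 := by
        intro h; exact hA0 (by rwa [show (0 : Fin (n+1)) = v from Fin.ext h.symm])
      refine ⟨by omega, ?_⟩
      have hsub : (Finset.univ.image
          (fun i : Fin v.val => (⟨i.val + 1, by have := i.isLt; have := v.isLt; omega⟩ :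
            Fin (n+1)))) ⊆ A := by
        intro w hw
        obtain ⟨i, _, rfl⟩ := Finset.mem_image.1 hw
        exact hDC v hv _ (by simp [Fin.ext_iff]) (by rw [Fin.le_def]; simp)
      have hcardim : (Finset.univ.image
          (fun i : Fin v.val => (⟨i.val + 1, by have := i.isLt; have := v.isLt; omega⟩ :
            Fin (n+1)))).card = v.val := by
        rw [Finset.card_image_of_injective _ (fun a b hab => by
          simpa [Fin.ext_iff] using hab), Finset.card_univ, Fintype.card_fin]
      have := Finset.card_le_card hsub
      omega
    · rintro ⟨h1, h2⟩
      by_contra hv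
      have hlt : ∀ w ∈ A, w.val < v.val := by
        intro w hw
        by_contra hwv
        exact hv (hDC w hw v (fun h => by subst h; simp at h1)
          (by rw [Fin.le_def]; omega))
      have hsub : A ⊆ Finset.univ.image
          (fun i : Fin (v.val - 1) =>
            (⟨i.val + 1, by have := i.isLt; have := v.isLt; omega⟩ : Fin (n+1))) := by
        intro w hw
        have hw0 : w.val ≠ 0 := by
          intro h; exact hA0 (by rwa [show (0 : Fin (n+1)) = w from Fin.ext h.symm])
        have := hlt w hw
        exact Finset.mem_image.2 ⟨⟨w.val - 1, by omega⟩, Finset.mem_univ _,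
          by simp [Fin.ext_iff]; omega⟩
      have hc := Finset.card_le_card hsub
      rw [Finset.card_image_of_injective _ (fun a b hab => by
        simpa [Fin.ext_iff] using hab), Finset.card_univ, Fintype.card_fin] at hc
      omega
  -- express A as an image
  have hAim : A = Finset.univ.image
      (fun i : Fin k => (⟨i.val + 1, by have := i.isLt; omega⟩ : Fin (n+1))) := by
    ext v
    rw [hAchar]
    simp only [Finset.mem_image, Finset.mem_univ, true_and]
    constructor
    · rintro ⟨h1, h2⟩
      exact ⟨⟨v.val - 1, by omega⟩, by simp [Fin.ext_iff]; omega⟩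
    · rintro ⟨i, rfl⟩
      exact ⟨by simp, i.isLt⟩
  have hDim : D = Finset.univ.image (fun i : Fin k => eD i) := by
    ext v
    simp only [Finset.mem_image, Finset.mem_univ, true_and]
    constructor
    · intro hv
      have : v ∈ Set.range (D.orderEmbOfFin hcard) := by
        rw [Finset.range_orderEmbOfFin]; exact hv
      obtain ⟨i, hi⟩ := this
      exact ⟨i, hi⟩
    · rintro ⟨i, rfl⟩
      exact Finset.orderEmbOfFin_mem D hcard i
  rw [hAim, hDim,
    Finset.sum_image (fun a _ b _ hab => (D.orderEmbOfFin hcard).injective hab),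
    Finset.sum_image (fun a _ b _ hab => by
      simpa [Fin.ext_iff] using hab)]
  apply Finset.sum_le_sum
  intro i _
  refine hdec _ _ (by simp [Fin.ext_iff]) ?_
  rw [Fin.le_def]
  exact hge i.val i.isLt

/-- On a path rooted at a leaf, assigning the costs in decreasing order and
the prizes in increasing order from the root is an optimal security system. -/
theorem stmt6 (n : ℕ) (c p : Fin (n+1) → ℚ)
    (hc : ∀ v, 0 ≤ c v) (hp : ∀ v, 0 ≤ p v)
    (hcdec : ∀ v w : Fin (n+1), v ≠ 0 → v ≤ w → c w ≤ c v)
    (hpinc : ∀ v w : Fin (n+1), v ≠ 0 → v ≤ w → p v ≤ p w) :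
    ∀ B : ℚ, 0 ≤ B → ∀ c' p' : Fin (n+1) → ℚ,
      valsNR n c' = valsNR n c → valsNR n p' = valsNR n p →
      maxp n (pathPar n) c p B ≤ maxp n (pathPar n) c' p' B := by
  classical
  intro B hB c' p' hc' hp'
  unfold maxp
  set NR := Finset.univ.filter (fun v : Fin (n+1) => v ≠ 0) with hNR
  have hNR0 : (0 : Fin (n+1)) ∉ NR := by simp [hNR]
  -- the key step: every attack feasible for (c,p) is feasible for (c',p')
  -- with at least as large a prize
  have hstep : ∀ A : Finset (Fin (n+1)), A ⊆ NR →
      (∀ v ∈ A, pathPar n v = 0 ∨ pathPar n v ∈ A) → (∑ v ∈ A, c v ≤ B) →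
      (∑ v ∈ A, c' v ≤ B) ∧ (∑ v ∈ A, p v ≤ ∑ v ∈ A, p' v) := by
    intro A hAsub hApar hAcost
    have hA0 : (0 : Fin (n+1)) ∉ A := fun h => hNR0 (hAsub h)
    have hDC := dcOfPar A hApar
    have hval : A.val ≤ NR.val := Finset.val_le_iff.2 hAsub
    constructor
    · -- cost feasibility
      have hS : A.val.map c' ≤ NR.val.map c := by
        calc A.val.map c' ≤ NR.val.map c' := Multiset.map_le_map hval
          _ = NR.val.map c := hc'
      obtain ⟨t, htle, htmap⟩ := exists_pre c (A.val.map c') NR.val hS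
      have htnd : t.Nodup := Multiset.nodup_of_le htle NR.nodup
      set D : Finset (Fin (n+1)) := ⟨t, htnd⟩ with hD
      have hD0 : (0 : Fin (n+1)) ∉ D := by
        intro h
        exact hNR0 (Multiset.mem_of_le htle h)
      have hcardD : D.card = A.card := by
        have : t.card = (t.map c).card := (Multiset.card_map _ _).symm
        simp only [Finset.card, hD, this, htmap, Multiset.card_map]
      have hsumD : ∑ v ∈ D, c v = ∑ v ∈ A, c' v := by
        rw [Finset.sum_eq_multiset_sum, Finset.sum_eq_multiset_sum]
        show (t.map c).sum = _
        rw [htmap]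
      calc ∑ v ∈ A, c' v = ∑ v ∈ D, c v := hsumD.symm
        _ ≤ ∑ v ∈ A, c v := keyLem c hcdec A D hA0 hDC hD0 hcardD
        _ ≤ B := hAcost
    · -- prize comparison
      have hS : A.val.map p' ≤ NR.val.map p := by
        calc A.val.map p' ≤ NR.val.map p' := Multiset.map_le_map hval
          _ = NR.val.map p := hp'
      obtain ⟨t, htle, htmap⟩ := exists_pre p (A.val.map p') NR.val hS
      have htnd : t.Nodup := Multiset.nodup_of_le htle NR.nodup
      set E : Finset (Fin (n+1)) := ⟨t, htnd⟩ with hE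
      have hE0 : (0 : Fin (n+1)) ∉ E := by
        intro h
        exact hNR0 (Multiset.mem_of_le htle h)
      have hcardE : E.card = A.card := by
        have : t.card = (t.map p).card := (Multiset.card_map _ _).symm
        simp only [Finset.card, hE, this, htmap, Multiset.card_map]
      have hsumE : ∑ v ∈ E, p v = ∑ v ∈ A, p' v := by
        rw [Finset.sum_eq_multiset_sum, Finset.sum_eq_multiset_sum]
        show (t.map p).sum = _
        rw [htmap]
      have hkey := keyLem (fun v => -p v) (fun v w hv hle => by
        simpa using hpinc v w hv hle) A E hA0 hDC hE0 hcardE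
      rw [Finset.sum_neg_distrib, Finset.sum_neg_distrib, neg_le_neg_iff] at hkey
      calc ∑ v ∈ A, p v ≤ ∑ v ∈ E, p v := hkey
        _ = ∑ v ∈ A, p' v := hsumE
  -- compare the two maxima
  set F1 := NR.powerset.filter
    (fun A => (∀ v ∈ A, pathPar n v = 0 ∨ pathPar n v ∈ A) ∧ ∑ v ∈ A, c v ≤ B) with hF1
  set F2 := NR.powerset.filter
    (fun A => (∀ v ∈ A, pathPar n v = 0 ∨ pathPar n v ∈ A) ∧ ∑ v ∈ A, c' v ≤ B) with hF2
  have hemp : (∅ : Finset (Fin (n+1))) ∈ F2 := by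
    rw [hF2, Finset.mem_filter]
    exact ⟨Finset.mem_powerset.2 (Finset.empty_subset _),
      fun v hv => absurd hv (Finset.notMem_empty v), by simpa using hB⟩
  have h0mem : (0 : ℚ) ∈ F2.image (fun A => ∑ v ∈ A, p' v) :=
    Finset.mem_image.2 ⟨∅, hemp, by simp⟩
  obtain ⟨q2, hq2⟩ := Finset.max_of_mem h0mem
  have hq2' : WithBot.unbotD 0 (F2.image (fun A => ∑ v ∈ A, p' v)).max = q2 := by
    rw [hq2]; rfl
  have hq2nn : (0 : ℚ) ≤ q2 := by
    have := Finset.le_max h0mem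
    rw [hq2] at this
    exact_mod_cast this
  rw [hq2']
  cases h1 : (F1.image (fun A => ∑ v ∈ A, p v)).max with
  | bot => simpa using hq2nn
  | coe q1 =>
    show q1 ≤ q2
    have hq1mem := Finset.mem_of_max h1
    obtain ⟨A, hAF1, hAq1⟩ := Finset.mem_image.1 hq1mem
    rw [hF1, Finset.mem_filter] at hAF1
    obtain ⟨hApow, hApar, hAcost⟩ := hAF1
    obtain ⟨hcost', hprize⟩ := hstep A (Finset.mem_powerset.1 hApow) hApar hAcost
    have hAF2 : A ∈ F2 := by
      rw [hF2, Finset.mem_filter]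
      exact ⟨hApow, hApar, hcost'⟩
    have hmem2 : (∑ v ∈ A, p' v) ∈ F2.image (fun A => ∑ v ∈ A, p' v) :=
      Finset.mem_image.2 ⟨A, hAF2, rfl⟩
    have hle2 := Finset.le_max hmem2
    rw [hq2] at hle2
    have : (∑ v ∈ A, p' v) ≤ q2 := by exact_mod_cast hle2
    calc q1 = ∑ v ∈ A, p v := hAq1.symm
      _ ≤ ∑ v ∈ A, p' v := hprize
      _ ≤ q2 := this
end

section
/- Let T be a rooted 3-caterpillar: root r with children u₁,…,u_k (k ≥ 2), and additional leaves u_{k+1},…,uₙ all attached to u₁. Let P = {p₁ ≤ p₂ ≤ ⋯ ≤ pₙ} be a multiset of prizes. Then in the P-model M = (T, I, P), the security system assigning p(uᵢ) = pᵢ for all i (smallest prize on u₁, next smallest on the remaining level-one vertices, largest prizes on the leaves under u₁) is optimal: for every integer budget m and every bijective prize assignment p', maxp(m,𝟙,p) ≤ maxp(m,𝟙,p'). -/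
/-- Parent function of the rooted 3-caterpillar: the root `0` has children
`u₁, …, uₖ`, and `u_{k+1}, …, uₙ` are leaves attached to `u₁`. -/
def catPar (n k : ℕ) : Fin (n+1) → Fin (n+1) :=
  fun v => if v.val ≤ k then 0 else 1



lemma cnt {n : ℕ} (t : ℕ) (A : Finset (Fin (n+1)))
    (h : ∀ v ∈ A, v.val ≠ 0 ∧ v.val ≤ t) : A.card ≤ t := by
  have hsub : A.image Fin.val ⊆ Finset.Icc 1 t := by
    intro x hx
    simp only [Finset.mem_image] at hx
    obtain ⟨v, hv, rfl⟩ := hx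
    have := h v hv
    simp only [Finset.mem_Icc]
    omega
  have hc := Finset.card_le_card hsub
  rw [Finset.card_image_of_injective _ Fin.val_injective, Nat.card_Icc] at hc
  omega

lemma top_bound {n : ℕ} (p : Fin (n+1) → ℚ)
    (hsort : ∀ v w : Fin (n+1), v ≠ 0 → v ≤ w → p v ≤ p w) :
    ∀ (s t : ℕ) (htn : t ≤ n) (A : Finset (Fin (n+1))), A.card = s →
      (∀ v ∈ A, v.val ≠ 0 ∧ v.val ≤ t) →
      ∑ v ∈ A, p v ≤ ∑ i ∈ Finset.range s, p ⟨t - i, by omega⟩ := by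
  intro s
  induction s with
  | zero =>
    intro t htn A hA _
    rw [Finset.card_eq_zero.mp hA]
    simp
  | succ s ih =>
    intro t htn A hA hmem
    have hne : A.Nonempty := Finset.card_pos.mp (by omega)
    set a := A.max' hne with ha
    have haA : a ∈ A := A.max'_mem hne
    have hav := hmem a haA
    have herase : (A.erase a).card = s := by
      rw [Finset.card_erase_of_mem haA, hA]; omega
    have hmem' : ∀ v ∈ A.erase a, v.val ≠ 0 ∧ v.val ≤ t - 1 := by
      intro v hv
      have hvA := Finset.mem_of_mem_erase hv
      have hlt : v < a := lt_of_le_of_ne (A.le_max' v hvA) (Finset.ne_of_mem_erase hv)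
      have hlt' : v.val < a.val := hlt
      have := hmem v hvA
      exact ⟨this.1, by omega⟩
    have hrec := ih (t-1) (by omega) (A.erase a) herase hmem'
    have hsum : ∑ v ∈ A, p v = p a + ∑ v ∈ A.erase a, p v :=
      (Finset.add_sum_erase A p haA).symm
    have hpa : p a ≤ p ⟨t, by omega⟩ := by
      apply hsort a _ (by
        intro h0
        exact hav.1 (by rw [h0]; rfl))
      rw [Fin.le_def]
      exact hav.2
    have hshift : ∑ i ∈ Finset.range s, p ⟨t - (i+1), by omega⟩
        = ∑ i ∈ Finset.range s, p ⟨t - 1 - i, by omega⟩ := by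
      apply Finset.sum_congr rfl
      intro i hi
      congr 1
      simp only [Fin.mk.injEq]
      omega
    rw [hsum, Finset.sum_range_succ']
    rw [add_comm (∑ i ∈ Finset.range s, _)]
    apply add_le_add
    · simpa using hpa
    · rw [hshift]; exact hrec

lemma bot_bound {n : ℕ} (p : Fin (n+1) → ℚ)
    (hsort : ∀ v w : Fin (n+1), v ≠ 0 → v ≤ w → p v ≤ p w) :
    ∀ (s j : ℕ) (hjn : j ≤ n) (J : Finset (Fin (n+1))), J.card = j →
      (∀ v ∈ J, v.val ≠ 0) → s ≤ j →
      ∃ W, W ⊆ J ∧ W.card = s ∧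
        ∑ i ∈ Finset.range s, p ⟨j - i, by omega⟩ ≤ ∑ v ∈ W, p v := by
  intro s
  induction s with
  | zero =>
    intro j hjn J _ _ _
    exact ⟨∅, by simp⟩
  | succ s ih =>
    intro j hjn J hJ hnz hsj
    have hne : J.Nonempty := Finset.card_pos.mp (by omega)
    set a := J.max' hne with ha
    have haJ : a ∈ J := J.max'_mem hne
    have haj : j ≤ a.val := by
      rw [← hJ]
      apply cnt
      intro v hv
      refine ⟨hnz v hv, ?_⟩
      have : v ≤ a := J.le_max' v hv
      exact this
    obtain ⟨W', hW'sub, hW'card, hW'sum⟩ :=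
      ih (j-1) (by omega) (J.erase a) (by rw [Finset.card_erase_of_mem haJ, hJ])
        (fun v hv => hnz v (Finset.mem_of_mem_erase hv)) (by omega)
    have hnotW' : a ∉ W' := fun h => (Finset.notMem_erase a J) (hW'sub h)
    refine ⟨insert a W', ?_, ?_, ?_⟩
    · intro x hx
      rcases Finset.mem_insert.mp hx with rfl | hx
      · exact haJ
      · exact Finset.mem_of_mem_erase (hW'sub hx)
    · rw [Finset.card_insert_of_notMem hnotW', hW'card]
    · rw [Finset.sum_insert hnotW', Finset.sum_range_succ']
      rw [add_comm (p a)]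
      apply add_le_add
      · refine le_trans (le_of_eq ?_) hW'sum
        apply Finset.sum_congr rfl
        intro i hi
        congr 1
        simp only [Fin.mk.injEq]
        omega
      · simp only [Nat.sub_zero]
        apply hsort _ a
        · intro h0
          have : j = 0 := by
            have := congrArg Fin.val h0
            simpa using this
          omega
        · rw [Fin.le_def]
          exact haj


lemma exists_sigma {α β : Type*} [DecidableEq α] [DecidableEq β] :
    ∀ (s t : Finset α) (f g : α → β), s.val.map f = t.val.map g →
      ∃ σ : α → α, Set.InjOn σ ↑s ∧ s.image σ = t ∧ ∀ x ∈ s, f x = g (σ x) := by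
  intro s
  induction s using Finset.induction_on with
  | empty =>
    intro t f g h
    have : t.val.map g = 0 := h.symm ▸ (by simp)
    have ht : t = ∅ := by
      rwa [Multiset.map_eq_zero, Finset.val_eq_zero] at this
    exact ⟨id, by simp, by simp [ht], by simp⟩
  | @insert a u hau ih =>
    intro t f g h
    rw [Finset.insert_val, Multiset.ndinsert_of_notMem (by simpa using hau),
      Multiset.map_cons] at h
    have hfa : f a ∈ t.val.map g := by rw [← h]; exact Multiset.mem_cons_self _ _
    obtain ⟨b, hb, hgb⟩ := Multiset.mem_map.mp hfa
    have hbt : b ∈ t := hb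
    have hrest : u.val.map f = (t.erase b).val.map g := by
      have h1 : t.val = b ::ₘ t.val.erase b := (Multiset.cons_erase hb).symm
      rw [h1, Multiset.map_cons, hgb] at h
      rw [(Multiset.cons_inj_right _).mp h, Finset.erase_val]
    obtain ⟨σ', hinj', himg', hval'⟩ := ih (t.erase b) f g hrest
    refine ⟨fun x => if x = a then b else σ' x, ?_, ?_, ?_⟩
    · intro x hx y hy hxy
      simp only [Finset.coe_insert, Set.mem_insert_iff, Finset.mem_coe] at hx hy
      dsimp only at hxy
      rcases hx with rfl | hx <;> rcases hy with rfl | hy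
      · rfl
      · exfalso
        have hyne : y ≠ x := fun h2 => hau (h2 ▸ hy)
        rw [if_pos rfl, if_neg hyne] at hxy
        have hmem : σ' y ∈ t.erase b := himg' ▸ Finset.mem_image_of_mem σ' hy
        rw [← hxy] at hmem
        exact Finset.notMem_erase b t hmem
      · exfalso
        have hxne : x ≠ y := fun h2 => hau (h2 ▸ hx)
        rw [if_neg hxne, if_pos rfl] at hxy
        have hmem : σ' x ∈ t.erase b := himg' ▸ Finset.mem_image_of_mem σ' hx
        rw [hxy] at hmem
        exact Finset.notMem_erase b t hmem
      · have hxne : x ≠ a := fun h2 => hau (h2 ▸ hx)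
        have hyne : y ≠ a := fun h2 => hau (h2 ▸ hy)
        rw [if_neg hxne, if_neg hyne] at hxy
        exact hinj' hx hy hxy
    · rw [Finset.image_insert]
      have h0 : (if a = a then b else σ' a) = b := if_pos rfl
      rw [h0]
      have : u.image (fun x => if x = a then b else σ' x) = u.image σ' := by
        apply Finset.image_congr
        intro x hx
        exact if_neg (fun h2 : x = a => hau (h2 ▸ hx))
      rw [this, himg', Finset.insert_erase hbt]
    · intro x hx
      rcases Finset.mem_insert.mp hx with rfl | hx2
      · dsimp only
        rw [if_pos rfl, hgb]
      · dsimp only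
        rw [if_neg (fun h2 : x = a => hau (h2 ▸ hx2))]
        exact hval' x hx2

lemma preim {α : Type*} [DecidableEq α] (S W : Finset α) (σ : α → α) (q : α → ℚ)
    (hinj : Set.InjOn σ ↑S) (hW : W ⊆ S.image σ) :
    ∃ P, P ⊆ S ∧ P.card = W.card ∧ (∀ v, v ∈ P ↔ v ∈ S ∧ σ v ∈ W) ∧
      ∑ v ∈ P, q (σ v) = ∑ w ∈ W, q w := by
  classical
  set P := S.filter (fun v => σ v ∈ W) with hP
  have hPS : P ⊆ S := Finset.filter_subset _ _
  have hinjP : Set.InjOn σ ↑P := hinj.mono (by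
    intro x hx; exact Finset.mem_coe.mpr (hPS (Finset.mem_coe.mp hx)))
  have himgP : P.image σ = W := by
    apply Finset.Subset.antisymm
    · intro w hw
      obtain ⟨v, hv, rfl⟩ := Finset.mem_image.mp hw
      exact (Finset.mem_filter.mp hv).2
    · intro w hw
      obtain ⟨v, hv, rfl⟩ := Finset.mem_image.mp (hW hw)
      exact Finset.mem_image_of_mem σ (Finset.mem_filter.mpr ⟨hv, hw⟩)
  refine ⟨P, hPS, ?_, fun v => Finset.mem_filter, ?_⟩
  · rw [← himgP, Finset.card_image_of_injOn hinjP]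
  · rw [← himgP, Finset.sum_image (fun x hx y hy hxy =>
      hinjP (Finset.mem_coe.mpr hx) (Finset.mem_coe.mpr hy) hxy)]

lemma aux_max {s t : Finset ℚ} (hs : s.Nonempty)
    (h : ∀ x ∈ s, ∃ y ∈ t, x ≤ y) : WithBot.unbotD 0 s.max ≤ WithBot.unbotD 0 t.max := by
  obtain ⟨x0, hx0⟩ := hs
  obtain ⟨y0, hy0, _⟩ := h x0 hx0
  have ht : t.Nonempty := ⟨y0, hy0⟩
  have hs : s.Nonempty := ⟨x0, hx0⟩
  rw [← Finset.coe_max' hs, ← Finset.coe_max' ht]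
  simp only [WithBot.unbotD_coe]
  apply Finset.max'_le
  intro y hy
  obtain ⟨z, hz, hyz⟩ := h y hy
  exact hyz.trans (Finset.le_max' t z hz)

lemma maxp_mono (n : ℕ) (par : Fin (n+1) → Fin (n+1)) (c p p' : Fin (n+1) → ℚ)
    (B : ℚ) (hB : 0 ≤ B)
    (h : ∀ A : Finset (Fin (n+1)), (∀ v ∈ A, v ≠ 0) →
      (∀ v ∈ A, par v = 0 ∨ par v ∈ A) → (∑ v ∈ A, c v ≤ B) →
      ∃ A' : Finset (Fin (n+1)), (∀ v ∈ A', v ≠ 0) ∧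
        (∀ v ∈ A', par v = 0 ∨ par v ∈ A') ∧ (∑ v ∈ A', c v ≤ B) ∧
        ∑ v ∈ A, p v ≤ ∑ v ∈ A', p' v) :
    maxp n par c p B ≤ maxp n par c p' B := by
  classical
  unfold maxp
  apply aux_max
  · refine ⟨0, Finset.mem_image.mpr ⟨∅, Finset.mem_filter.mpr
      ⟨Finset.empty_mem_powerset _, by simp, by simpa using hB⟩, by simp⟩⟩
  · intro x hx
    obtain ⟨A, hA, rfl⟩ := Finset.mem_image.mp hx
    have hA' := Finset.mem_filter.mp hA
    have hAS := Finset.mem_powerset.mp hA'.1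
    obtain ⟨A', hA'nz, hA'cl, hA'cost, hle⟩ :=
      h A (fun v hv => (Finset.mem_filter.mp (hAS hv)).2) hA'.2.1 hA'.2.2
    exact ⟨∑ v ∈ A', p' v, Finset.mem_image.mpr ⟨A', Finset.mem_filter.mpr
      ⟨Finset.mem_powerset.mpr (fun v hv =>
        Finset.mem_filter.mpr ⟨Finset.mem_univ v, hA'nz v hv⟩), hA'cl, hA'cost⟩, rfl⟩, hle⟩

lemma key (n k m : ℕ) (hkn : k + 1 ≤ n) (p p' : Fin (n+1) → ℚ)
    (hsort : ∀ v w : Fin (n+1), v ≠ 0 → v ≤ w → p v ≤ p w)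
    (hp' : valsNR n p' = valsNR n p)
    (A : Finset (Fin (n+1))) (hAnz : ∀ v ∈ A, v ≠ 0)
    (hAcl : ∀ v ∈ A, catPar n k v = 0 ∨ catPar n k v ∈ A)
    (hAm : A.card ≤ m) :
    ∃ A' : Finset (Fin (n+1)), (∀ v ∈ A', v ≠ 0) ∧
      (∀ v ∈ A', catPar n k v = 0 ∨ catPar n k v ∈ A') ∧ A'.card ≤ m ∧
      ∑ v ∈ A, p v ≤ ∑ v ∈ A', p' v := by
  classical
  set S : Finset (Fin (n+1)) := Finset.univ.filter (fun v : Fin (n+1) => v ≠ 0) with hSdef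
  have hSmem : ∀ v : Fin (n+1), v ∈ S ↔ v ≠ 0 := by
    intro v; simp [hSdef]
  have hvalnz : ∀ v : Fin (n+1), v ≠ 0 ↔ v.val ≠ 0 := by
    intro v
    constructor
    · intro h h0; exact h (Fin.ext h0)
    · intro h h0; exact h (by rw [h0]; rfl)
  have hmap : S.val.map p' = S.val.map p := hp'
  obtain ⟨σ, hinj, himg, hval⟩ := exists_sigma S S p' p hmap
  have hmapsTo : ∀ x ∈ S, σ x ∈ S := fun x hx => himg ▸ Finset.mem_image_of_mem σ hx
  have hAS : ∀ v ∈ A, v ∈ S := fun v hv => (hSmem v).mpr (hAnz v hv)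
  have hsn : A.card ≤ n := by
    apply cnt
    intro v hv
    exact ⟨(hvalnz v).mp (hAnz v hv), by have := v.isLt; omega⟩
  have h1v : ((1 : Fin (n+1))).val = 1 := by
    have h0 : ((1 : Fin (n+1))).val = 1 % (n+1) := rfl
    rw [h0]
    exact Nat.mod_eq_of_lt (by omega)
  have h1ne : (1 : Fin (n+1)) ≠ 0 := by
    rw [hvalnz, h1v]; omega
  have h1S : (1 : Fin (n+1)) ∈ S := (hSmem _).mpr h1ne
  by_cases h1A : (1 : Fin (n+1)) ∈ A
  · -- case: 1 ∈ A
    have hs1 : 1 ≤ A.card := Finset.card_pos.mpr ⟨1, h1A⟩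
    set s := A.card with hs
    have hA0card : (A.erase 1).card = s - 1 := by
      rw [Finset.card_erase_of_mem h1A]
    have htop := top_bound p hsort (s-1) n (le_refl n) (A.erase 1) hA0card
      (fun v hv => ⟨(hvalnz v).mp (hAnz v (Finset.mem_of_mem_erase hv)), by omega⟩)
    have hsplit : ∑ v ∈ A, p v = p 1 + ∑ v ∈ A.erase 1, p v :=
      (Finset.add_sum_erase A p h1A).symm
    set w := σ 1 with hw
    have hwS : w ∈ S := hmapsTo 1 h1S
    have hwnz : w.val ≠ 0 := (hvalnz w).mp ((hSmem w).mp hwS)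
    set Tfull : Finset (Fin (n+1)) :=
      (Finset.range s).image (fun i => (⟨n - i, by omega⟩ : Fin (n+1))) with hTfull
    have hinjT : ∀ a ∈ Finset.range s, ∀ b ∈ Finset.range s,
        (⟨n - a, by omega⟩ : Fin (n+1)) = ⟨n - b, by omega⟩ → a = b := by
      intro a ha b hb hab
      simp only [Finset.mem_range] at ha hb
      have := congrArg Fin.val hab
      simp only at this
      omega
    have hTcard : Tfull.card = s := by
      rw [hTfull, Finset.card_image_of_injOn hinjT, Finset.card_range]
    have hTS : ∀ v ∈ Tfull, v ∈ S := by
      intro v hv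
      rw [hTfull] at hv
      obtain ⟨i, hi, rfl⟩ := Finset.mem_image.mp hv
      simp only [Finset.mem_range] at hi
      rw [hSmem, hvalnz]
      simp only
      omega
    have hTsum : ∑ v ∈ Tfull, p v = ∑ i ∈ Finset.range s, p ⟨n - i, by omega⟩ := by
      rw [hTfull, Finset.sum_image hinjT]
    set T' : Finset (Fin (n+1)) :=
      (Finset.range (s-1)).image (fun i => (⟨n - i, by omega⟩ : Fin (n+1))) with hT'
    have hinjT' : ∀ a ∈ Finset.range (s-1), ∀ b ∈ Finset.range (s-1),
        (⟨n - a, by omega⟩ : Fin (n+1)) = ⟨n - b, by omega⟩ → a = b := by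
      intro a ha b hb hab
      simp only [Finset.mem_range] at ha hb
      have := congrArg Fin.val hab
      simp only at this
      omega
    have hT'card : T'.card = s - 1 := by
      rw [hT', Finset.card_image_of_injOn hinjT', Finset.card_range]
    have hT'sum : ∑ v ∈ T', p v = ∑ i ∈ Finset.range (s-1), p ⟨n - i, by omega⟩ := by
      rw [hT', Finset.sum_image hinjT']
    have hT'sub : T' ⊆ Tfull := by
      rw [hT', hTfull]
      apply Finset.image_subset_image
      apply Finset.range_subset_range.mpr
      omega
    -- choose W
    obtain ⟨W, hWS, hWcard, hwW, hkeyineq⟩ :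
        ∃ W : Finset (Fin (n+1)), (∀ v ∈ W, v ∈ S) ∧ W.card = s - 1 ∧ w ∉ W ∧
          p 1 + ∑ i ∈ Finset.range (s-1), p ⟨n - i, by omega⟩ ≤ p w + ∑ v ∈ W, p v := by
      by_cases hwT : w ∈ Tfull
      · refine ⟨Tfull.erase w, fun v hv => hTS v (Finset.mem_of_mem_erase hv), ?_, Finset.notMem_erase w Tfull, ?_⟩
        · rw [Finset.card_erase_of_mem hwT, hTcard]
        · have h2 : p w + ∑ v ∈ Tfull.erase w, p v = ∑ v ∈ Tfull, p v :=
            Finset.add_sum_erase Tfull p hwT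
          rw [h2, hTsum]
          have hss : s - 1 + 1 = s := by omega
          have hsum2 : ∑ i ∈ Finset.range s, p ⟨n - i, by omega⟩
              = (∑ i ∈ Finset.range (s-1), p ⟨n - i, by omega⟩) + p ⟨n - (s-1), by omega⟩ := by
            conv_lhs => rw [← hss]
            rw [Finset.sum_range_succ]
          rw [hsum2, add_comm (∑ i ∈ Finset.range (s-1), p ⟨n - i, by omega⟩)]
          apply add_le_add_left
          apply hsort 1 _ h1ne
          rw [Fin.le_def, h1v]
          show 1 ≤ n - (s-1)
          omega
      · refine ⟨T', fun v hv => hTS v (hT'sub hv), hT'card, fun hmem => hwT (hT'sub hmem), ?_⟩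
        rw [hT'sum]
        apply add_le_add_left
        apply hsort 1 w h1ne
        rw [Fin.le_def, h1v]
        omega
    have hWimg : W ⊆ S.image σ := by
      rw [himg]
      intro v hv; exact hWS v hv
    obtain ⟨P, hPS, hPcard, hPmem, hPsum⟩ := preim S W σ p hinj hWimg
    have h1P : (1 : Fin (n+1)) ∉ P := by
      intro h
      exact hwW ((hPmem 1).mp h).2
    refine ⟨insert 1 P, ?_, ?_, ?_, ?_⟩
    · intro v hv
      rcases Finset.mem_insert.mp hv with rfl | hv
      · exact h1ne
      · exact (hSmem v).mp (hPS hv)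
    · intro v hv
      by_cases hvk : v.val ≤ k
      · left; unfold catPar; rw [if_pos hvk]
      · right; unfold catPar; rw [if_neg hvk]; exact Finset.mem_insert_self 1 P
    · rw [Finset.card_insert_of_notMem h1P, hPcard, hWcard]
      omega
    · rw [Finset.sum_insert h1P, hsplit]
      have hp'1 : p' 1 = p w := hval 1 h1S
      have hp'P : ∑ v ∈ P, p' v = ∑ v ∈ P, p (σ v) :=
        Finset.sum_congr rfl (fun v hv => hval v (hPS hv))
      rw [hp'1, hp'P, hPsum]
      calc p 1 + ∑ v ∈ A.erase 1, p v
          ≤ p 1 + ∑ i ∈ Finset.range (s-1), p ⟨n - i, by omega⟩ := by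
            apply add_le_add_right htop
        _ ≤ p w + ∑ v ∈ W, p v := hkeyineq
  · -- case: 1 ∉ A
    set s := A.card with hs
    have hAk : ∀ v ∈ A, v.val ≠ 0 ∧ v.val ≤ k := by
      intro v hv
      refine ⟨(hvalnz v).mp (hAnz v hv), ?_⟩
      by_contra hgt
      push_neg at hgt
      rcases hAcl v hv with h0 | hmem
      · unfold catPar at h0
        rw [if_neg (by omega)] at h0
        exact h1ne h0
      · unfold catPar at hmem
        rw [if_neg (by omega)] at hmem
        exact h1A hmem
    have hsk : s ≤ k := cnt k A hAk
    have htop := top_bound p hsort s k (by omega) A rfl hAk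
    set U := S.filter (fun v => v.val ≤ k) with hU
    have hUS : U ⊆ S := Finset.filter_subset _ _
    have hUcard : U.card = k := by
      have himgU : U.image Fin.val = Finset.Icc 1 k := by
        ext x
        simp only [Finset.mem_image, Finset.mem_Icc]
        constructor
        · rintro ⟨v, hv, rfl⟩
          rw [hU, Finset.mem_filter] at hv
          have := (hvalnz v).mp ((hSmem v).mp hv.1)
          exact ⟨by omega, hv.2⟩
        · rintro ⟨h1, h2⟩
          refine ⟨⟨x, by omega⟩, ?_, rfl⟩
          rw [hU, Finset.mem_filter]
          refine ⟨(hSmem _).mpr ((hvalnz _).mpr (by simp; omega)), by simp; omega⟩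
      have := congrArg Finset.card himgU
      rwa [Finset.card_image_of_injective _ Fin.val_injective, Nat.card_Icc,
        Nat.add_sub_cancel] at this
    set J := U.image σ with hJ
    have hinjU : Set.InjOn σ ↑U := hinj.mono (by
      intro x hx; exact Finset.mem_coe.mpr (hUS (Finset.mem_coe.mp hx)))
    have hJcard : J.card = k := by
      rw [hJ, Finset.card_image_of_injOn hinjU, hUcard]
    have hJnz : ∀ v ∈ J, v.val ≠ 0 := by
      intro v hv
      rw [hJ] at hv
      obtain ⟨u, hu, rfl⟩ := Finset.mem_image.mp hv
      exact (hvalnz _).mp ((hSmem _).mp (hmapsTo u (hUS hu)))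
    obtain ⟨W, hWJ, hWcard, hWsum⟩ := bot_bound p hsort s k (by omega) J hJcard hJnz hsk
    obtain ⟨P, hPU, hPcard, hPmem, hPsum⟩ := preim U W σ p hinjU (by rw [← hJ]; exact hWJ)
    refine ⟨P, ?_, ?_, ?_, ?_⟩
    · intro v hv
      exact (hSmem v).mp (hUS (hPU hv))
    · intro v hv
      left
      have hvk : v.val ≤ k := by
        have := hPU hv
        rw [hU, Finset.mem_filter] at this
        exact this.2
      unfold catPar; rw [if_pos hvk]
    · rw [hPcard, hWcard]; exact hAm
    · have hp'P : ∑ v ∈ P, p' v = ∑ v ∈ P, p (σ v) :=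
        Finset.sum_congr rfl (fun v hv => hval v (hUS (hPU hv)))
      rw [hp'P, hPsum]
      exact le_trans htop hWsum

/-- On a rooted 3-caterpillar, assigning the prizes in increasing order of the
index (smallest prizes on level one, largest on the leaves under `u₁`) is an
optimal security system for the P-model. -/
theorem stmt13 (n k : ℕ) (hk2 : 2 ≤ k) (hkn : k + 1 ≤ n)
    (p : Fin (n+1) → ℚ) (hp : ∀ v, 0 ≤ p v)
    (hsort : ∀ v w : Fin (n+1), v ≠ 0 → v ≤ w → p v ≤ p w)
    (m : ℕ) (p' : Fin (n+1) → ℚ) (hp' : valsNR n p' = valsNR n p) :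
    maxp n (catPar n k) (fun _ => 1) p m ≤ maxp n (catPar n k) (fun _ => 1) p' m := by
  apply maxp_mono n (catPar n k) (fun _ => 1) p p' m (Nat.cast_nonneg m)
  intro A hnz hcl hcost
  have hAm : A.card ≤ m := by
    have hsum : (∑ v ∈ A, (1:ℚ)) = (A.card : ℚ) := by simp
    rw [hsum] at hcost
    exact_mod_cast hcost
  obtain ⟨A', h1, h2, h3, h4⟩ := key n k m hkn p p' hsort hp' A hnz hcl hAm
  refine ⟨A', h1, h2, ?_, h4⟩
  have hsum' : (∑ v ∈ A', (1:ℚ)) = (A'.card : ℚ) := by simp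
  rw [hsum']
  exact_mod_cast h3
end
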